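/- Let $(a_p)$ be a sequence of positive reals and $M=(M_p)$ a positive sequence. Then $\sup_p h^p a_p / M_p < \infty$ for some $h>0$ if and only if $\sup_p a_p / (M_p \prod_{j=0}^{p} r_j) < \infty$ for every nondecreasing sequence $(r_j)$ of positive reals with $r_j \to \infty$. -/

import Mathlib

private lemma key11 (a : ℕ → ℝ) (ha : ∀ p, 0 < a p) (M : ℕ → ℝ) (hM : ∀ p, 0 < M p)
    (H : ∀ h : ℝ, 0 < h → ∀ B : ℝ, ∃ p, B < h ^ p * a p / M p) (m k : ℕ) :
    ∃ n, m < n ∧ ((k : ℝ) + 1) * ((k : ℝ) + 2) ^ (n + 1) < a n / M n := by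
  have hk2 : (0:ℝ) < (k : ℝ) + 2 := by positivity
  set h : ℝ := ((k : ℝ) + 2)⁻¹ with hh
  have hh0 : 0 < h := by positivity
  set B : ℝ := max (((k : ℝ) + 1) * ((k : ℝ) + 2))
      ((Finset.range (m + 1)).sup' ⟨0, by simp⟩ fun n => h ^ n * a n / M n) with hB
  obtain ⟨n, hn⟩ := H h hh0 B
  refine ⟨n, ?_, ?_⟩
  · by_contra hle
    push_neg at hle
    have : h ^ n * a n / M n ≤ B := by
      refine le_trans ?_ (le_max_right _ _)
      exact Finset.le_sup' (fun n => h ^ n * a n / M n)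
        (Finset.mem_range.2 (Nat.lt_succ_of_le hle))
    exact absurd hn (not_lt.2 this)
  · have h1 : ((k : ℝ) + 1) * ((k : ℝ) + 2) < h ^ n * a n / M n :=
      lt_of_le_of_lt (le_max_left _ _) hn
    have hMn := hM n
    have hpow : (0:ℝ) < ((k : ℝ) + 2) ^ n := by positivity
    have := mul_lt_mul_of_pos_right h1 hpow
    calc ((k : ℝ) + 1) * ((k : ℝ) + 2) ^ (n + 1)
        = ((k : ℝ) + 1) * ((k : ℝ) + 2) * ((k : ℝ) + 2) ^ n := by ring
      _ < h ^ n * a n / M n * ((k : ℝ) + 2) ^ n := this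
      _ = a n / M n := by
          rw [hh, inv_pow]
          field_simp
  
theorem stmt11 (a : ℕ → ℝ) (ha : ∀ p, 0 < a p) (M : ℕ → ℝ) (hM : ∀ p, 0 < M p) :
    (∃ h : ℝ, 0 < h ∧ ∃ B : ℝ, ∀ p, h ^ p * a p / M p ≤ B) ↔
    (∀ r : ℕ → ℝ, (∀ j, 0 < r j) → Monotone r →
      Filter.Tendsto r Filter.atTop Filter.atTop →
      ∃ B : ℝ, ∀ p, a p / (M p * ∏ j ∈ Finset.range (p + 1), r j) ≤ B) := by
  constructor
  · rintro ⟨h, hh0, B, hB⟩ r hr hrm hrt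
    -- eventually r j ≥ 1/h
    obtain ⟨N, hN⟩ := (hrt.eventually_ge_atTop h⁻¹).exists_forall_of_atTop
    set t : ℕ → ℝ := fun j => min (r j * h) 1 with ht
    have ht0 : ∀ j, 0 < t j := fun j => lt_min (mul_pos (hr j) hh0) one_pos
    have ht1 : ∀ j, t j ≤ 1 := fun j => min_le_right _ _
    have htN : ∀ j, N ≤ j → t j = 1 := by
      intro j hj
      have : (1:ℝ) ≤ r j * h := by
        calc (1:ℝ) = h⁻¹ * h := (inv_mul_cancel₀ hh0.ne').symm
          _ ≤ r j * h := mul_le_mul_of_nonneg_right (hN j hj) hh0.le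
      simp [ht, min_eq_right this]
    set K : ℝ := ∏ j ∈ Finset.range N, t j with hK
    have hK0 : 0 < K := Finset.prod_pos fun j _ => ht0 j
    have hKle : ∀ p, K ≤ ∏ j ∈ Finset.range (p + 1), t j := by
      intro p
      have e1 : ∏ j ∈ Finset.range (N + (p + 1)), t j = K := by
        rw [Finset.prod_range_add]
        have : ∏ j ∈ Finset.range (p + 1), t (N + j) = 1 :=
          Finset.prod_eq_one fun j _ => htN _ (Nat.le_add_right _ _)
        rw [this, mul_one]
      have e2 : ∏ j ∈ Finset.range (p + 1 + N), t j ≤ ∏ j ∈ Finset.range (p + 1), t j := by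
        rw [Finset.prod_range_add]
        have h1 : ∏ j ∈ Finset.range N, t (p + 1 + j) ≤ 1 :=
          Finset.prod_le_one (fun j _ => (ht0 _).le) (fun j _ => ht1 _)
        calc (∏ j ∈ Finset.range (p+1), t j) * ∏ j ∈ Finset.range N, t (p + 1 + j)
            ≤ (∏ j ∈ Finset.range (p+1), t j) * 1 := by
              apply mul_le_mul_of_nonneg_left h1
              exact (Finset.prod_pos fun j _ => ht0 j).le
          _ = _ := mul_one _
      rw [← e1, Nat.add_comm N (p+1)]
      exact e2
    have hprod : ∀ p, K * (h⁻¹) ^ (p + 1) ≤ ∏ j ∈ Finset.range (p + 1), r j := by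
      intro p
      have : ∀ j ∈ Finset.range (p+1), t j * h⁻¹ ≤ r j := by
        intro j _
        have : t j ≤ r j * h := min_le_left _ _
        calc t j * h⁻¹ ≤ (r j * h) * h⁻¹ := by
              apply mul_le_mul_of_nonneg_right this (by positivity)
          _ = r j := by field_simp
      calc K * (h⁻¹) ^ (p + 1)
          ≤ (∏ j ∈ Finset.range (p+1), t j) * (h⁻¹) ^ (p + 1) := by
            apply mul_le_mul_of_nonneg_right (hKle p) (by positivity)
        _ = ∏ j ∈ Finset.range (p+1), (t j * h⁻¹) := by
            rw [Finset.prod_mul_distrib, Finset.prod_const, Finset.card_range]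
        _ ≤ ∏ j ∈ Finset.range (p+1), r j :=
            Finset.prod_le_prod (fun j _ => mul_nonneg (ht0 j).le (by positivity)) this
    refine ⟨h / K * B, fun p => ?_⟩
    have hQ0 : 0 < ∏ j ∈ Finset.range (p + 1), r j := Finset.prod_pos fun j _ => hr j
    have hlow : 0 < K * (h⁻¹) ^ (p + 1) := mul_pos hK0 (by positivity)
    have step1 : a p / (M p * ∏ j ∈ Finset.range (p + 1), r j)
        ≤ a p / (M p * (K * (h⁻¹) ^ (p + 1))) := by
      apply div_le_div_of_nonneg_left (ha p).le (mul_pos (hM p) hlow)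
      exact mul_le_mul_of_nonneg_left (hprod p) (hM p).le
    have step2 : a p / (M p * (K * (h⁻¹) ^ (p + 1))) = h / K * (h ^ p * a p / M p) := by
      rw [inv_pow]
      field_simp
      ring
    calc a p / (M p * ∏ j ∈ Finset.range (p + 1), r j)
        ≤ h / K * (h ^ p * a p / M p) := by rw [← step2]; exact step1
      _ ≤ h / K * B := by
          apply mul_le_mul_of_nonneg_left (hB p) (by positivity)
  · intro hrhs
    by_contra hL
    push_neg at hL
    have H : ∀ h : ℝ, 0 < h → ∀ B : ℝ, ∃ p, B < h ^ p * a p / M p := by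
      intro h hh B
      obtain ⟨p, hp⟩ := hL h hh B
      exact ⟨p, hp⟩
    choose F hF1 hF2 using key11 a ha M hM H
    set P : ℕ → ℕ := fun k => Nat.rec 0 (fun k pk => F pk k) k with hPdef
    have hPsucc : ∀ k, P (k + 1) = F (P k) k := fun k => rfl
    have hPlt : ∀ k, P k < P (k + 1) := fun k => hF1 (P k) k
    have hPmono : StrictMono P := strictMono_nat_of_lt_succ hPlt
    have hex : ∀ j, ∃ k, j ≤ P k := fun j => ⟨j, hPmono.le_apply⟩
    set f : ℕ → ℕ := fun j => Nat.find (hex j) with hf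
    set r : ℕ → ℝ := fun j => (f j : ℝ) + 1 with hrdef
    have hr0 : ∀ j, 0 < r j := fun j => by positivity
    have hfmono : Monotone f := fun i j hij =>
      Nat.find_mono (fun k hk => hij.trans hk)
    have hrmono : Monotone r := fun i j hij => by
      have := hfmono hij
      simp only [hrdef]
      have : (f i : ℝ) ≤ (f j : ℝ) := Nat.cast_le.2 this
      linarith
    have hjle : ∀ j, j ≤ P (f j) := fun j => Nat.find_spec (hex j)
    have hrt : Filter.Tendsto r Filter.atTop Filter.atTop := by
      apply Filter.tendsto_atTop_atTop.2
      intro b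
      obtain ⟨K, hKb⟩ := exists_nat_ge b
      refine ⟨P K + 1, fun j hj => ?_⟩
      have hKf : K < f j := by
        by_contra hc
        push_neg at hc
        have := (hjle j).trans (hPmono.monotone hc)
        omega
      have : (K : ℝ) ≤ (f j : ℝ) := Nat.cast_le.2 hKf.le
      simp only [hrdef]
      linarith
    obtain ⟨B, hB⟩ := hrhs r hr0 hrmono hrt
    obtain ⟨k, hk⟩ := exists_nat_gt B
    set n := P (k + 1) with hn
    have hgt : ((k : ℝ) + 1) * ((k : ℝ) + 2) ^ (n + 1) < a n / M n := by
      rw [hn, hPsucc k]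
      exact hF2 (P k) k
    have hrle : ∀ j ∈ Finset.range (n + 1), r j ≤ (k : ℝ) + 2 := by
      intro j hj
      have hjn : j ≤ n := Nat.lt_succ_iff.1 (Finset.mem_range.1 hj)
      have hfj : f j ≤ k + 1 := Nat.find_min' (hex j) hjn
      have : (f j : ℝ) ≤ (k : ℝ) + 1 := by exact_mod_cast hfj
      simp only [hrdef]
      linarith
    have hQ0 : 0 < ∏ j ∈ Finset.range (n + 1), r j := Finset.prod_pos fun j _ => hr0 j
    have hprodle : ∏ j ∈ Finset.range (n + 1), r j ≤ ((k : ℝ) + 2) ^ (n + 1) := by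
      calc ∏ j ∈ Finset.range (n + 1), r j
          ≤ ∏ _j ∈ Finset.range (n + 1), ((k : ℝ) + 2) :=
            Finset.prod_le_prod (fun j _ => (hr0 j).le) hrle
        _ = ((k : ℝ) + 2) ^ (n + 1) := by
            rw [Finset.prod_const, Finset.card_range]
    have hpow : (0:ℝ) < ((k : ℝ) + 2) ^ (n + 1) := by positivity
    have h2 : a n / (M n * ((k : ℝ) + 2) ^ (n + 1))
        ≤ a n / (M n * ∏ j ∈ Finset.range (n + 1), r j) :=
      div_le_div_of_nonneg_left (ha n).le (mul_pos (hM n) hQ0)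
        (mul_le_mul_of_nonneg_left hprodle (hM n).le)
    have h3 : (k : ℝ) + 1 < a n / (M n * ((k : ℝ) + 2) ^ (n + 1)) := by
      rw [← div_div, lt_div_iff₀ hpow]
      linarith [hgt]
    have : B < a n / (M n * ∏ j ∈ Finset.range (n + 1), r j) := by
      have : (k : ℝ) < (k : ℝ) + 1 := by linarith
      linarith [hB n]
    exact absurd (hB n) (not_le.2 this)
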